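/- The critical points of h in (0, 2π) are exactly θ = π/3, θ = π and θ = 5π/3. Moreover, h is strictly increasing on (0, π/3] and strictly decreasing on [π/3, π]; h attains its maximum on (0, 2π), equal to −1/2, exactly at θ = π/3 and θ = 5π/3; and θ = π is a strict local minimum of h with h(π) = −3/2. (The maxima correspond to the elliptic equilibria L₄ and L₅ and the local minimum to the hyperbolic equilibrium near L₃ of the averaged co-orbital problem.) -/

import Mathlib

open Real

/-- The averaged co-orbital perturbation on quasi-circular orbits at exact resonance
(up to the factor `ε`): `h(θ) = cos θ - (2 - 2cos θ)^{-1/2}`. -/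
noncomputable def hfun (θ : ℝ) : ℝ := cos θ - 1 / Real.sqrt (2 - 2 * cos θ)

lemma sin_half_pos {θ : ℝ} (h1 : 0 < θ) (h2 : θ < 2 * π) : 0 < sin (θ / 2) :=
  Real.sin_pos_of_pos_of_lt_pi (by linarith) (by linarith)

lemma cos_eq_sin_half {θ : ℝ} : cos θ = 1 - 2 * sin (θ / 2) ^ 2 := by
  have h : cos (2 * (θ / 2)) = 2 * cos (θ / 2) ^ 2 - 1 := Real.cos_two_mul (θ / 2)
  have h2 : sin (θ / 2) ^ 2 + cos (θ / 2) ^ 2 = 1 := Real.sin_sq_add_cos_sq (θ / 2)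
  have h3 : 2 * (θ / 2) = θ := by ring
  rw [h3] at h
  linarith

lemma sqrt_two_sub_cos {θ : ℝ} (h1 : 0 < θ) (h2 : θ < 2 * π) :
    Real.sqrt (2 - 2 * cos θ) = 2 * sin (θ / 2) := by
  have hs := sin_half_pos h1 h2
  have h : 2 - 2 * cos θ = (2 * sin (θ / 2)) ^ 2 := by
    rw [cos_eq_sin_half]; ring
  rw [h, Real.sqrt_sq (by positivity)]

lemma hfun_eq {θ : ℝ} (h1 : 0 < θ) (h2 : θ < 2 * π) :
    hfun θ = 1 - 2 * sin (θ / 2) ^ 2 - 1 / (2 * sin (θ / 2)) := by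
  unfold hfun
  rw [sqrt_two_sub_cos h1 h2, cos_eq_sin_half]

lemma sin_theta_eq {θ : ℝ} : sin θ = 2 * sin (θ / 2) * cos (θ / 2) := by
  have h := Real.sin_two_mul (θ / 2)
  rw [show 2 * (θ / 2) = θ by ring] at h
  exact h

lemma hasDerivAt_hfun {θ : ℝ} (h1 : 0 < θ) (h2 : θ < 2 * π) :
    HasDerivAt hfun (cos (θ / 2) * (1 - 8 * sin (θ / 2) ^ 3) / (4 * sin (θ / 2) ^ 2)) θ := by
  have hs := sin_half_pos h1 h2
  have hsq : Real.sqrt (2 - 2 * cos θ) = 2 * sin (θ / 2) := sqrt_two_sub_cos h1 h2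
  have hfpos : 0 < 2 - 2 * cos θ := by
    rw [cos_eq_sin_half]; nlinarith
  have hsqpos : 0 < Real.sqrt (2 - 2 * cos θ) := by rw [hsq]; positivity
  have d1 : HasDerivAt (fun x : ℝ => 2 - 2 * cos x) (2 * sin θ) θ := by
    have := ((Real.hasDerivAt_cos θ).const_mul (2 : ℝ)).const_sub 2
    rw [show (2:ℝ) * sin θ = -(2 * -sin θ) by ring]; exact this
  have d2 := (Real.hasDerivAt_sqrt hfpos.ne').comp θ d1
  have d4 := (Real.hasDerivAt_cos θ).sub ((hasDerivAt_const θ (1 : ℝ)).div d2 hsqpos.ne')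
  have heq : -sin θ - (0 * Real.sqrt (2 - 2 * cos θ) -
        1 * (1 / (2 * Real.sqrt (2 - 2 * cos θ)) * (2 * sin θ))) / Real.sqrt (2 - 2 * cos θ) ^ 2
      = cos (θ / 2) * (1 - 8 * sin (θ / 2) ^ 3) / (4 * sin (θ / 2) ^ 2) := by
    rw [hsq, sin_theta_eq]
    field_simp
    ring
  rw [← heq]
  exact d4

lemma sin_half_lt_half {x : ℝ} (h1 : 0 < x) (h2 : x < π / 3) : sin (x / 2) < 1 / 2 := by
  have hpi := Real.pi_pos
  have := Real.strictMonoOn_sin (a := x / 2) (b := π / 6)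
    ⟨by linarith, by linarith⟩ ⟨by linarith, by linarith⟩ (by linarith)
  rwa [Real.sin_pi_div_six] at this

lemma half_lt_sin_half {x : ℝ} (h1 : π / 3 < x) (h2 : x < π) : 1 / 2 < sin (x / 2) := by
  have hpi := Real.pi_pos
  have := Real.strictMonoOn_sin (a := π / 6) (b := x / 2)
    ⟨by linarith, by linarith⟩ ⟨by linarith, by linarith⟩ (by linarith)
  rwa [Real.sin_pi_div_six] at this

lemma deriv_hfun_pos {x : ℝ} (h1 : 0 < x) (h2 : x < π / 3) : 0 < deriv hfun x := by
  have hpi := Real.pi_pos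
  have hx2 : x < 2 * π := by linarith
  have hs := sin_half_pos h1 hx2
  have hlt := sin_half_lt_half h1 h2
  rw [(hasDerivAt_hfun h1 hx2).deriv]
  have hc : 0 < cos (x / 2) := Real.cos_pos_of_mem_Ioo ⟨by linarith, by linarith⟩
  have h8 : 0 < 1 - 8 * sin (x / 2) ^ 3 := by
    nlinarith [mul_pos (mul_pos hs hs) hs, sq_nonneg (sin (x / 2))]
  have hd : 0 < 4 * sin (x / 2) ^ 2 := by positivity
  exact div_pos (mul_pos hc h8) hd

lemma deriv_hfun_neg {x : ℝ} (h1 : π / 3 < x) (h2 : x < π) : deriv hfun x < 0 := by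
  have hpi := Real.pi_pos
  have hx1 : 0 < x := by linarith
  have hx2 : x < 2 * π := by linarith
  have hs := sin_half_pos hx1 hx2
  have hlt := half_lt_sin_half h1 h2
  rw [(hasDerivAt_hfun hx1 hx2).deriv]
  have hc : 0 < cos (x / 2) := Real.cos_pos_of_mem_Ioo ⟨by linarith, by linarith⟩
  have h8 : 1 - 8 * sin (x / 2) ^ 3 < 0 := by
    nlinarith [mul_pos (mul_pos hs hs) hs, sq_nonneg (sin (x / 2))]
  have hd : 0 < 4 * sin (x / 2) ^ 2 := by positivity
  exact div_neg_of_neg_of_pos (mul_neg_of_pos_of_neg hc h8) hd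

lemma continuousOn_hfun : ContinuousOn hfun (Set.Ioo 0 (2 * π)) := by
  apply Real.continuous_cos.continuousOn.sub
  apply ContinuousOn.div continuousOn_const
  · exact (Real.continuous_sqrt.comp (by continuity)).continuousOn
  · intro x hx
    rw [sqrt_two_sub_cos hx.1 hx.2]
    have := sin_half_pos hx.1 hx.2
    exact ne_of_gt (by linarith)

lemma sin_eq_half_cases {x : ℝ} (h1 : 0 < x) (h2 : x < π) (h : sin x = 1 / 2) :
    x = π / 6 ∨ x = 5 * π / 6 := by
  have hpi := Real.pi_pos
  rcases le_or_gt x (π / 2) with hx | hx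
  · left
    apply Real.injOn_sin ⟨by linarith, hx⟩ ⟨by linarith, by linarith⟩
    rw [h, Real.sin_pi_div_six]
  · right
    have h5 : π - x = π / 6 := by
      apply Real.injOn_sin ⟨by linarith, by linarith⟩ ⟨by linarith, by linarith⟩
      rw [Real.sin_pi_sub, h, Real.sin_pi_div_six]
    linarith

lemma cos_eq_zero_cases {x : ℝ} (h1 : 0 < x) (h2 : x < π) (h : cos x = 0) : x = π / 2 := by
  have hpi := Real.pi_pos
  apply Real.injOn_cos ⟨h1.le, h2.le⟩ ⟨by linarith, by linarith⟩
  rw [h, Real.cos_pi_div_two]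

lemma hfun_le_max {θ : ℝ} (h1 : 0 < θ) (h2 : θ < 2 * π) : hfun θ ≤ -(1 / 2) := by
  have hs := sin_half_pos h1 h2
  rw [hfun_eq h1 h2]
  set s := sin (θ / 2) with hsdef
  have h2s : (0 : ℝ) < 2 * s := by linarith
  have key : (3 / 2 - 2 * s ^ 2) * (2 * s) ≤ 1 := by
    nlinarith [mul_nonneg (sq_nonneg (2 * s - 1)) hs.le]
  have := (le_div_iff₀ h2s).mpr key
  linarith

lemma hfun_pi_div_three : hfun (π / 3) = -(1 / 2) := by
  unfold hfun
  rw [Real.cos_pi_div_three, show (2 : ℝ) - 2 * (1 / 2) = 1 by norm_num, Real.sqrt_one]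
  norm_num

lemma hfun_five_pi_div_three : hfun (5 * π / 3) = -(1 / 2) := by
  have h : (5 : ℝ) * π / 3 = 2 * π - π / 3 := by ring
  unfold hfun
  rw [h, Real.cos_two_pi_sub, Real.cos_pi_div_three,
    show (2 : ℝ) - 2 * (1 / 2) = 1 by norm_num, Real.sqrt_one]
  norm_num

lemma hfun_pi : hfun π = -(3 / 2) := by
  unfold hfun
  rw [Real.cos_pi, show (2 : ℝ) - 2 * (-1) = 2 ^ 2 by norm_num, Real.sqrt_sq (by norm_num)]
  norm_num

lemma hfun_eq_max_iff {θ : ℝ} (h1 : 0 < θ) (h2 : θ < 2 * π) :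
    hfun θ = -(1 / 2) ↔ θ = π / 3 ∨ θ = 5 * π / 3 := by
  have hpi := Real.pi_pos
  constructor
  · intro h
    have hs := sin_half_pos h1 h2
    rw [hfun_eq h1 h2] at h
    set s := sin (θ / 2) with hsdef
    have h2s : (0 : ℝ) < 2 * s := by linarith
    have key : (3 / 2 - 2 * s ^ 2) * (2 * s) = 1 := by
      field_simp at h
      nlinarith [h]
    have hfac : (2 * s - 1) ^ 2 * (s + 1) = 0 := by nlinarith [key]
    have hs12 : s = 1 / 2 := by
      rcases mul_eq_zero.mp hfac with h' | h'
      · nlinarith [h']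
      · nlinarith [h']
    have := sin_eq_half_cases (by linarith) (by linarith) hs12
    rcases this with h' | h'
    · left; linarith
    · right; linarith
  · rintro (rfl | rfl)
    · exact hfun_pi_div_three
    · exact hfun_five_pi_div_three

lemma hfun_local_min : ∃ δ > 0, ∀ θ : ℝ, θ ≠ π → |θ - π| < δ → hfun π < hfun θ := by
  have hpi := Real.pi_pos
  refine ⟨π / 2, by linarith, fun θ hne habs => ?_⟩
  rw [abs_lt] at habs
  have h1 : 0 < θ := by linarith
  have h2 : θ < 2 * π := by linarith
  have hs := sin_half_pos h1 h2
  have habs2 : |π / 2 - θ / 2| < π / 4 := by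
    rw [abs_lt]; constructor <;> linarith
  have habs2' := (abs_lt.mp habs2)
  have habsnn := abs_nonneg (π / 2 - θ / 2)
  have hkey : sin (θ / 2) = cos |π / 2 - θ / 2| := by
    rw [Real.cos_abs, Real.cos_pi_div_two_sub]
  have hgap : 1 / 2 < sin (θ / 2) := by
    rw [hkey]
    have := Real.strictAntiOn_cos (a := |π / 2 - θ / 2|) (b := π / 3)
      ⟨habsnn, by linarith⟩ ⟨by linarith, by linarith⟩ (by linarith)
    rw [Real.cos_pi_div_three] at this
    linarith
  have hlt1 : sin (θ / 2) < 1 := by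
    rw [hkey]
    have hne0 : 0 < |π / 2 - θ / 2| := by
      rw [abs_pos]
      intro h
      exact hne (by linarith)
    have := Real.strictAntiOn_cos (a := 0) (b := |π / 2 - θ / 2|)
      ⟨le_refl 0, by linarith⟩ ⟨habsnn, by linarith⟩ hne0
    rw [Real.cos_zero] at this
    linarith
  rw [hfun_pi, hfun_eq h1 h2]
  set s := sin (θ / 2) with hsdef
  have h2s : (0 : ℝ) < 2 * s := by linarith
  have hq : 0 < 4 * s ^ 2 + 4 * s - 1 := by nlinarith [sq_nonneg (2 * s - 1)]
  have key : 1 < (5 / 2 - 2 * s ^ 2) * (2 * s) := by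
    nlinarith [mul_pos (sub_pos.mpr hlt1) hq]
  have := (div_lt_iff₀ h2s).mpr key
  linarith

lemma hfun_strictMonoOn : StrictMonoOn hfun (Set.Ioc (0 : ℝ) (π / 3)) := by
  have hpi := Real.pi_pos
  apply strictMonoOn_of_deriv_pos (convex_Ioc _ _)
  · exact continuousOn_hfun.mono (fun x hx => ⟨hx.1, by linarith [hx.2]⟩)
  · rw [interior_Ioc]
    intro x hx
    exact deriv_hfun_pos hx.1 hx.2

lemma hfun_strictAntiOn : StrictAntiOn hfun (Set.Icc (π / 3) π) := by
  have hpi := Real.pi_pos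
  apply strictAntiOn_of_deriv_neg (convex_Icc _ _)
  · exact continuousOn_hfun.mono (fun x hx => ⟨by linarith [hx.1], by linarith [hx.2]⟩)
  · rw [interior_Icc]
    intro x hx
    exact deriv_hfun_neg hx.1 hx.2

lemma hfun_crit_set :
    {θ ∈ Set.Ioo (0 : ℝ) (2 * π) | deriv hfun θ = 0} = {π / 3, π, 5 * π / 3} := by
  have hpi := Real.pi_pos
  ext θ
  simp only [Set.mem_setOf_eq, Set.mem_insert_iff, Set.mem_singleton_iff, Set.mem_Ioo]
  constructor
  · rintro ⟨⟨h1, h2⟩, hd⟩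
    have hs := sin_half_pos h1 h2
    rw [(hasDerivAt_hfun h1 h2).deriv] at hd
    have h4 : (4 : ℝ) * sin (θ / 2) ^ 2 ≠ 0 := ne_of_gt (by positivity)
    have hmul : cos (θ / 2) * (1 - 8 * sin (θ / 2) ^ 3) = 0 := by
      rcases div_eq_zero_iff.mp hd with h | h
      · exact h
      · exact absurd h h4
    rcases mul_eq_zero.mp hmul with hc | h8
    · right; left
      have := cos_eq_zero_cases (by linarith) (by linarith) hc
      linarith
    · have hfac : (2 * sin (θ / 2) - 1) * (4 * sin (θ / 2) ^ 2 + 2 * sin (θ / 2) + 1) = 0 := by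
        linear_combination -h8
      have hs12 : sin (θ / 2) = 1 / 2 := by
        rcases mul_eq_zero.mp hfac with h' | h'
        · linarith
        · nlinarith [sq_nonneg (sin (θ / 2))]
      rcases sin_eq_half_cases (by linarith) (by linarith) hs12 with h' | h'
      · left; linarith
      · right; right; linarith
  · intro h
    rcases h with rfl | rfl | rfl
    · refine ⟨⟨by linarith, by linarith⟩, ?_⟩
      rw [(hasDerivAt_hfun (by linarith) (by linarith)).deriv,
        show π / 3 / 2 = π / 6 by ring, Real.sin_pi_div_six]
      norm_num
    · refine ⟨⟨by linarith, by linarith⟩, ?_⟩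
      rw [(hasDerivAt_hfun (by linarith) (by linarith)).deriv, Real.cos_pi_div_two]
      norm_num
    · refine ⟨⟨by linarith, by linarith⟩, ?_⟩
      rw [(hasDerivAt_hfun (by linarith) (by linarith)).deriv,
        show 5 * π / 3 / 2 = π - π / 6 by ring, Real.sin_pi_sub, Real.sin_pi_div_six]
      norm_num


/-- Critical points and extrema of `h(θ) = cos θ - (2 - 2cos θ)^{-1/2}` on `(0, 2π)`:
the critical points are exactly `π/3`, `π`, `5π/3`; `h` is strictly increasing on
`(0, π/3]` and strictly decreasing on `[π/3, π]`; the maximum on `(0, 2π)` equals `-1/2`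
and is attained exactly at `π/3` and `5π/3`; and `π` is a strict local minimum with
`h(π) = -3/2`. -/
theorem hfun_critical_points :
    {θ ∈ Set.Ioo (0 : ℝ) (2 * π) | deriv hfun θ = 0} = {π / 3, π, 5 * π / 3} ∧
    StrictMonoOn hfun (Set.Ioc (0 : ℝ) (π / 3)) ∧
    StrictAntiOn hfun (Set.Icc (π / 3) π) ∧
    (∀ θ ∈ Set.Ioo (0 : ℝ) (2 * π), hfun θ ≤ -(1 / 2)) ∧
    (∀ θ ∈ Set.Ioo (0 : ℝ) (2 * π), (hfun θ = -(1 / 2) ↔ θ = π / 3 ∨ θ = 5 * π / 3)) ∧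
    hfun π = -(3 / 2) ∧
    (∃ δ > 0, ∀ θ : ℝ, θ ≠ π → |θ - π| < δ → hfun π < hfun θ) :=
  ⟨hfun_crit_set, hfun_strictMonoOn, hfun_strictAntiOn,
    fun _ hθ => hfun_le_max hθ.1 hθ.2, fun _ hθ => hfun_eq_max_iff hθ.1 hθ.2,
    hfun_pi, hfun_local_min⟩
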